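/- If a finite direct product ∏_{i=1}^n R_i of rings is a GUNC ring, then each factor R_i is a GUNC ring. -/

import Mathlib

def IsUniquelyNilClean {R : Type*} [Ring R] (a : R) : Prop :=
  ∃! e : R, IsIdempotentElem e ∧ IsNilpotent (a - e)

/-- A ring is GUNC if every non-invertible element is uniquely nil-clean. -/
def IsGUNC (R : Type*) [Ring R] : Prop :=
  ∀ a : R, ¬ IsUnit a → IsUniquelyNilClean a

theorem gunc_of_pi_gunc {n : ℕ} {R : Fin n → Type*} [∀ i, Ring (R i)]
    (h : IsGUNC (∀ i, R i)) (i : Fin n) : IsGUNC (R i) := by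
  intro a ha
  set b : ∀ j, R j := Pi.single i a with hb
  have hbu : ¬ IsUnit b := by
    intro hu
    exact ha (by simpa [hb] using (Pi.evalRingHom R i).isUnit_map hu)
  -- key: lifting a candidate idempotent
  have key : ∀ e : R i, IsIdempotentElem e ∧ IsNilpotent (a - e) →
      IsIdempotentElem (Pi.single i e : ∀ j, R j) ∧
        IsNilpotent (b - Pi.single i e) := by
    intro e ⟨he, k, hk⟩
    constructor
    · funext j
      by_cases hij : j = i
      · subst hij; simpa using he.eq
      · simp [Pi.single_eq_of_ne hij]
    · refine ⟨k + 1, ?_⟩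
      funext j
      by_cases hij : j = i
      · subst hij
        simp only [Pi.pow_apply, Pi.sub_apply, hb, Pi.single_eq_same]
        rw [pow_succ', hk]; simp
      · simp [Pi.pow_apply, Pi.sub_apply, hb, Pi.single_eq_of_ne hij]
  obtain ⟨E, hE, hEuniq⟩ := h b hbu
  refine ⟨E i, ?_, ?_⟩
  · constructor
    · exact congrFun hE.1 i
    · obtain ⟨k, hk⟩ := hE.2
      refine ⟨k, ?_⟩
      have := congrFun hk i
      simpa [hb, Pi.pow_apply, Pi.single_eq_same] using this
  · intro e he
    have := hEuniq (Pi.single i e) (key e he)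
    have := congrFun this i
    simpa using this
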